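/- Let K be a field of characteristic p > 0 and let G be a finitely generated subgroup of K^* × K^* of rank r (i.e. dim_ℚ(G ⊗_ℤ ℚ) = r). Then the equation x + y = 1 has at most p^r solutions (x, y) ∈ G satisfying x ∉ K^p and y ∉ K^p, where K^p := {z^p : z ∈ K}. -/

import Mathlib

open scoped TensorProduct

/-- Field computation at the heart of the argument: if `x + y = 1`, `x` is not a `p`-th
power, and `x * u ^ p + y * v ^ p = 1`, then `u = v` and `u ^ p = 1`. -/
lemma aux_field_unit_eq {p : ℕ} [Fact p.Prime] {K : Type*} [Field K] [CharP K p] {x y : K}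
    (hx1 : x + y = 1) (hxp : ¬ ∃ z : K, z ^ p = x) {u v : Kˣ}
    (h : x * (u : K) ^ p + y * (v : K) ^ p = 1) : (u : K) = v ∧ (u : K) ^ p = 1 := by
  by_cases huv : (u : K) = v
  · refine ⟨huv, ?_⟩
    rw [huv] at h ⊢
    have hv : (x + y) * (v : K) ^ p = 1 := by linear_combination h
    rwa [hx1, one_mul] at hv
  · exfalso
    apply hxp
    refine ⟨(1 - (v : K)) / ((u : K) - v), ?_⟩
    have hne : (u : K) - v ≠ 0 := sub_ne_zero.mpr huv
    have hnep : ((u : K) - v) ^ p ≠ 0 := pow_ne_zero _ hne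
    rw [sub_pow_char] at hnep
    have h2 : x * ((u : K) ^ p - (v : K) ^ p) = 1 - (v : K) ^ p := by
      linear_combination h - (v : K) ^ p * hx1
    rw [div_pow, sub_pow_char, sub_pow_char, one_pow, div_eq_iff hnep]
    linear_combination -h2

/-- If a family is linearly independent "mod p" in a `p`-torsion-free abelian group, it is
linearly independent over `ℤ`. -/
lemma aux_linearIndependent_int {A : Type*} [AddCommGroup A] {p : ℕ} (hp : 1 < p)
    (htf : ∀ a : A, p • a = 0 → a = 0) {k : ℕ} (a : Fin k → A)
    (h : ∀ c : Fin k → ℤ, (∑ i, c i • a i = 0) → ∀ i, (p : ℤ) ∣ c i) :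
    LinearIndependent ℤ a := by
  rw [Fintype.linearIndependent_iff]
  have key : ∀ N : ℕ, ∀ c : Fin k → ℤ, (∑ i, (c i).natAbs) ≤ N →
      (∑ i, c i • a i = 0) → ∀ i, c i = 0 := by
    intro N
    induction N with
    | zero =>
      intro c hc _ i
      have h1 : (c i).natAbs ≤ ∑ j, (c j).natAbs :=
        Finset.single_le_sum (f := fun j => (c j).natAbs)
          (fun j _ => Nat.zero_le _) (Finset.mem_univ i)
      omega
    | succ N ih =>
      intro c hc hsum i
      by_cases hzero : ∀ j, c j = 0
      · exact hzero i
      · push_neg at hzero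
        obtain ⟨j0, hj0⟩ := hzero
        have hdvd := h c hsum
        set d : Fin k → ℤ := fun i => c i / p with hd
        have hcd : ∀ i, c i = p * d i := fun i => (Int.mul_ediv_cancel' (hdvd i)).symm
        have hsum' : ∑ i, d i • a i = 0 := by
          apply htf
          rw [Finset.smul_sum, ← hsum]
          apply Finset.sum_congr rfl
          intro i _
          rw [← natCast_zsmul, smul_smul, ← hcd i]
        have habs : ∀ i, (c i).natAbs = p * (d i).natAbs := fun i => by
          rw [hcd i, Int.natAbs_mul, Int.natAbs_natCast]
        have hsum_abs : ∑ j, (c j).natAbs = p * ∑ j, (d j).natAbs := by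
          rw [Finset.mul_sum]; exact Finset.sum_congr rfl fun j _ => habs j
        have hdj0 : 1 ≤ (d j0).natAbs := by
          rcases Nat.eq_zero_or_pos (d j0).natAbs with h0 | h0
          · exact absurd (by rw [hcd j0, Int.natAbs_eq_zero.mp h0, mul_zero]) hj0
          · exact h0
        have hS1 : 1 ≤ ∑ j, (d j).natAbs :=
          le_trans hdj0 (Finset.single_le_sum (f := fun j => (d j).natAbs)
            (fun j _ => Nat.zero_le _) (Finset.mem_univ j0))
        have h2S : 2 * (∑ j, (d j).natAbs) ≤ p * ∑ j, (d j).natAbs :=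
          Nat.mul_le_mul_right _ hp
        have hlt : (∑ j, (d j).natAbs) ≤ N := by omega
        rw [hcd i, ih d hlt hsum' i, mul_zero]
  intro c hsum
  exact key _ c le_rfl hsum

/-- If `A` is a finitely generated `p`-torsion-free abelian group of rank at most `r`, then any
image of `A` which is a `ZMod p`-module has cardinality at most `p ^ r`. -/
lemma aux_quot_card {p : ℕ} [hFact : Fact p.Prime] {A Q : Type*} [AddCommGroup A]
    [Module.Finite ℤ A] (htf : ∀ a : A, p • a = 0 → a = 0) {r : ℕ}
    (hrkA : Module.rank ℤ A ≤ (r : Cardinal)) [AddCommGroup Q] [Module (ZMod p) Q]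
    (f : A →+ Q) (hf : Function.Surjective f) :
    Finite Q ∧ Nat.card Q ≤ p ^ r := by
  haveI : NeZero p := ⟨hFact.out.pos.ne'⟩
  haveI : AddGroup.FG A := Module.Finite.iff_addGroup_fg.mp ‹_›
  have hfgQ : AddGroup.FG Q := AddGroup.fg_of_surjective hf
  haveI hMF : Module.Finite (ZMod p) Q := by
    obtain ⟨T, hT⟩ := hfgQ.out
    refine ⟨⟨T, ?_⟩⟩
    have hle : AddSubgroup.closure (T : Set Q) ≤
        (Submodule.span (ZMod p) (T : Set Q)).toAddSubgroup :=
      (AddSubgroup.closure_le _).mpr Submodule.subset_span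
    rw [eq_top_iff]
    intro q _
    exact hle (hT ▸ AddSubgroup.mem_top q)
  haveI hQfin : Finite Q := Module.finite_of_finite (ZMod p) (M := Q)
  refine ⟨hQfin, ?_⟩
  set k := Module.finrank (ZMod p) Q with hk
  have hkr : k ≤ r := by
    let b := Module.finBasis (ZMod p) Q
    choose lift hlift using hf
    set a : Fin k → A := fun i => lift (b i) with haf
    have hli : LinearIndependent ℤ a := by
      apply aux_linearIndependent_int hFact.out.one_lt htf
      intro c hsum
      have himg : ∑ i, ((c i : ZMod p)) • (b i) = 0 := by
        have := congrArg f hsum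
        rw [map_sum, map_zero] at this
        rw [← this]
        apply Finset.sum_congr rfl
        intro i _
        rw [map_zsmul, haf, hlift, Int.cast_smul_eq_zsmul]
      have hz := Fintype.linearIndependent_iff.mp b.linearIndependent _ himg
      intro i
      exact (ZMod.intCast_zmod_eq_zero_iff_dvd _ _).mp (hz i)
    have h1 := hli.cardinal_lift_le_rank
    have h2 := le_trans h1 (Cardinal.lift_le.mpr hrkA)
    rw [Cardinal.mk_fin, Cardinal.lift_natCast, Cardinal.lift_natCast, Nat.cast_le] at h2
    exact h2
  letI : Fintype Q := Fintype.ofFinite _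
  have hcardQ : Nat.card Q = p ^ k := by
    rw [Nat.card_eq_fintype_card, Module.card_eq_pow_finrank (K := ZMod p) (V := Q), ZMod.card]
  rw [hcardQ]
  exact Nat.pow_le_pow_right hFact.out.pos hkr

/-- Let `K` be a field of characteristic `p > 0` and `G` a finitely generated
subgroup of `Kˣ × Kˣ` of rank `r`. Then `x + y = 1` has at most `p^r` solutions `(x, y) ∈ G`
with `x ∉ K^p` and `y ∉ K^p`. -/
theorem unit_equation_not_pth_power {p : ℕ} (hp : 0 < p) {K : Type*} [Field K] [CharP K p]
    (G : Subgroup (Kˣ × Kˣ)) (hG : Group.FG ↥G) (r : ℕ)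
    (hrank : Module.finrank ℚ (ℚ ⊗[ℤ] Additive ↥G) = r) :
    {s : Kˣ × Kˣ | s ∈ G ∧ (s.1 : K) + (s.2 : K) = 1 ∧
        (¬ ∃ z : K, z ^ p = (s.1 : K)) ∧ ¬ ∃ z : K, z ^ p = (s.2 : K)}.Finite ∧
      Nat.card {s : Kˣ × Kˣ | s ∈ G ∧ (s.1 : K) + (s.2 : K) = 1 ∧
        (¬ ∃ z : K, z ^ p = (s.1 : K)) ∧ ¬ ∃ z : K, z ^ p = (s.2 : K)} ≤ p ^ r := by
  haveI : NeZero p := ⟨hp.ne'⟩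
  haveI hFact : Fact p.Prime := CharP.char_is_prime_of_pos K p
  -- injectivity of `z ↦ z ^ p` on `K`
  have powinj : ∀ z w : K, z ^ p = w ^ p → z = w := by
    intro z w hzw
    have h0 : (z - w) ^ p = 0 := by rw [sub_pow_char, hzw, sub_self]
    exact sub_eq_zero.mp (pow_eq_zero_iff hp.ne' |>.mp h0)
  set S := {s : Kˣ × Kˣ | s ∈ G ∧ (s.1 : K) + (s.2 : K) = 1 ∧
      (¬ ∃ z : K, z ^ p = (s.1 : K)) ∧ ¬ ∃ z : K, z ^ p = (s.2 : K)} with hSdef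
  -- the quotient `G / G^p`, additively
  set A := Additive ↥G with hA
  let φ : A →+ A := AddMonoidHom.mk' (fun x => p • x) (fun a b => smul_add p a b)
  let H := φ.range
  letI iM : Module (ZMod p) (A ⧸ H) := QuotientAddGroup.zmodModule (fun x => ⟨x, rfl⟩)
  -- `A` has no `p`-torsion
  have htf : ∀ x : A, p • x = 0 → x = 0 := by
    intro x hx
    have h1 : (Additive.toMul x) ^ p = 1 := by
      rw [← toMul_nsmul, hx]; rfl
    set g : ↥G := Additive.toMul x with hg
    have h2 : ((g : Kˣ × Kˣ)) ^ p = 1 := by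
      have := congrArg (Subtype.val) h1
      simpa using this
    have h21 : ((g : Kˣ × Kˣ).1 : K) ^ p = 1 := by
      have := congrArg (fun z : Kˣ × Kˣ => (z.1 : K)) h2
      simpa using this
    have h22 : ((g : Kˣ × Kˣ).2 : K) ^ p = 1 := by
      have := congrArg (fun z : Kˣ × Kˣ => (z.2 : K)) h2
      simpa using this
    have e1 : ((g : Kˣ × Kˣ).1 : K) = 1 := powinj _ _ (by rw [h21, one_pow])
    have e2 : ((g : Kˣ × Kˣ).2 : K) = 1 := powinj _ _ (by rw [h22, one_pow])
    have hgone : g = 1 := by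
      apply Subtype.ext
      exact Prod.ext (Units.ext e1) (Units.ext e2)
    have : Additive.toMul x = 1 := hg ▸ hgone
    simpa using this
  -- the injection from the solution set into the quotient
  let F : S → A ⧸ H := fun s => QuotientAddGroup.mk (Additive.ofMul (⟨s.1, s.2.1⟩ : ↥G))
  have hFinj : Function.Injective F := by
    intro s t hst
    set a : ↥G := ⟨s.1, s.2.1⟩ with ha
    set b : ↥G := ⟨t.1, t.2.1⟩ with hb
    have hmem : -Additive.ofMul a + Additive.ofMul b ∈ H := QuotientAddGroup.eq.mp hst
    obtain ⟨x, hx⟩ := hmem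
    have hx' : p • x = -Additive.ofMul a + Additive.ofMul b := hx
    set g : ↥G := Additive.toMul x with hg
    have hgp : g ^ p = a⁻¹ * b := by
      have := congrArg Additive.toMul hx'
      rw [toMul_nsmul] at this
      simpa using this
    have hab : b = a * g ^ p := by rw [hgp]; group
    have hb1 : ((t : Kˣ × Kˣ).1 : K) = ((s : Kˣ × Kˣ).1 : K) * ((g : Kˣ × Kˣ).1 : K) ^ p := by
      have := congrArg (fun z : ↥G => (((z : Kˣ × Kˣ)).1 : K)) hab
      simpa [Units.val_mul] using this
    have hb2 : ((t : Kˣ × Kˣ).2 : K) = ((s : Kˣ × Kˣ).2 : K) * ((g : Kˣ × Kˣ).2 : K) ^ p := by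
      have := congrArg (fun z : ↥G => (((z : Kˣ × Kˣ)).2 : K)) hab
      simpa [Units.val_mul] using this
    obtain ⟨hsG, hs1, hsp1, hsp2⟩ := s.2
    obtain ⟨htG, ht1, htp1, htp2⟩ := t.2
    have heq : ((s : Kˣ × Kˣ).1 : K) * ((g : Kˣ × Kˣ).1 : K) ^ p +
        ((s : Kˣ × Kˣ).2 : K) * ((g : Kˣ × Kˣ).2 : K) ^ p = 1 := by
      rw [← hb1, ← hb2]; exact ht1
    obtain ⟨huv, hup⟩ := aux_field_unit_eq hs1 hsp1 heq
    have hT1 : (t : Kˣ × Kˣ).1 = (s : Kˣ × Kˣ).1 := by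
      apply Units.ext; rw [hb1, hup, mul_one]
    have hT2 : (t : Kˣ × Kˣ).2 = (s : Kˣ × Kˣ).2 := by
      apply Units.ext; rw [hb2, ← huv, hup, mul_one]
    apply Subtype.ext
    exact (Prod.ext hT1 hT2).symm
  -- rank bound
  haveI hMFA : Module.Finite ℤ A := Module.Finite.iff_addGroup_fg.mpr (GroupFG.iff_add_fg.mp hG)
  haveI : Module.Finite ℚ (ℚ ⊗[ℤ] A) := Module.Finite.base_change ℤ ℚ A
  haveI : IsLocalizedModule (nonZeroDivisors ℤ) (TensorProduct.mk ℤ ℚ A 1) :=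
    (isLocalizedModule_iff_isBaseChange (nonZeroDivisors ℤ) ℚ _).mpr
      (TensorProduct.isBaseChange ℤ A ℚ)
  have hrk : Module.rank ℚ (ℚ ⊗[ℤ] A) = Module.rank ℤ A :=
    by
      have h1 := IsLocalizedModule.rank_eq (p := nonZeroDivisors ℤ) le_rfl (TensorProduct.mk ℤ ℚ A 1)
      have h2 := IsLocalization.rank_eq (S := ℚ) (p := nonZeroDivisors ℤ) (N := ℚ ⊗[ℤ] A) le_rfl
      rw [h2]; convert h1 using 2; exact Subsingleton.elim _ _
  have hrkA : Module.rank ℤ A ≤ (r : Cardinal) := by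
    rw [← hrk, ← hrank, Module.finrank_eq_rank]
  -- apply the quotient cardinality bound
  obtain ⟨hQfin, hQcard⟩ := @aux_quot_card p hFact A (A ⧸ H) _ hMFA htf r hrkA _ iM
    (QuotientAddGroup.mk' H) (QuotientAddGroup.mk'_surjective H)
  have hfin : S.Finite := Set.finite_coe_iff.mp (Finite.of_injective F hFinj)
  refine ⟨hfin, ?_⟩
  calc Nat.card S ≤ Nat.card (A ⧸ H) := Nat.card_le_card_of_injective F hFinj
    _ ≤ p ^ r := hQcard
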